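/- In the planar Kepler problem with ℓ ≠ 0 and E ≠ 0, with I' = (k/(-E))·(r/|r|) and I = A/E, the vector from I to I' equals (ℓ/E)·(*p), and hence the distance |I' - I| = (|ℓ|/|E|)·|p| is proportional to the speed. -/

import Mathlib

/-- The plane vector `(a, b)` as an element of `EuclideanSpace ℝ (Fin 2)`. -/
noncomputable def e2 (a b : ℝ) : EuclideanSpace ℝ (Fin 2) :=
  (WithLp.equiv 2 (Fin 2 → ℝ)).symm ![a, b]

/-- Rotation by +π/2: `*(w₁, w₂) = (-w₂, w₁)`. -/
noncomputable def rot (w : EuclideanSpace ℝ (Fin 2)) : EuclideanSpace ℝ (Fin 2) :=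
  e2 (-(w 1)) (w 0)

lemma rot_apply0 (w : EuclideanSpace ℝ (Fin 2)) : rot w 0 = -(w 1) := rfl
lemma rot_apply1 (w : EuclideanSpace ℝ (Fin 2)) : rot w 1 = w 0 := rfl

lemma norm_sq_eq (w : EuclideanSpace ℝ (Fin 2)) : ‖w‖ ^ 2 = w 0 ^ 2 + w 1 ^ 2 := by
  simp only [EuclideanSpace.norm_sq_eq, Fin.sum_univ_two, Real.norm_eq_abs, sq_abs]

lemma inner_eq (v w : EuclideanSpace ℝ (Fin 2)) :
    (inner ℝ v w : ℝ) = v 0 * w 0 + v 1 * w 1 := by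
  simp [EuclideanSpace.inner_eq_star_dotProduct, dotProduct, Fin.sum_univ_two]
  ring

lemma norm_rot (w : EuclideanSpace ℝ (Fin 2)) : ‖rot w‖ = ‖w‖ := by
  have h : ‖rot w‖ ^ 2 = ‖w‖ ^ 2 := by
    rw [norm_sq_eq, norm_sq_eq, rot_apply0, rot_apply1]; ring
  nlinarith [norm_nonneg (rot w), norm_nonneg w]

/-- With `I' = (k/(-E)) r/‖r‖` and `I = A/E`, the vector `I' - I` equals
`(ℓ/E) • (*p)`, so the distance `‖I' - I‖ = (|ℓ|/|E|)‖p‖` is proportional to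
the speed. -/
theorem II'_prop_speed (k : ℝ) (r p : EuclideanSpace ℝ (Fin 2)) (hr : r ≠ 0)
    (ℓ : ℝ) (hℓdef : ℓ = r 0 * p 1 - r 1 * p 0) (hℓ : ℓ ≠ 0)
    (E : ℝ) (hE : E = ‖p‖ ^ 2 / 2 - k / ‖r‖) (hEne : E ≠ 0)
    (A : EuclideanSpace ℝ (Fin 2))
    (hA : A = ‖p‖ ^ 2 • r - (inner ℝ r p : ℝ) • p - (k / ‖r‖) • r)
    (I : EuclideanSpace ℝ (Fin 2)) (hI : I = E⁻¹ • A)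
    (I' : EuclideanSpace ℝ (Fin 2)) (hI' : I' = (k / (-E) / ‖r‖) • r) :
    I' - I = (ℓ / E) • rot p ∧ ‖I' - I‖ = (|ℓ| / |E|) * ‖p‖ := by
  have heq : I' - I = (ℓ / E) • rot p := by
    subst hI hI' hA hℓdef
    ext i
    fin_cases i
    · simp [rot_apply0, rot_apply1, norm_sq_eq p, inner_eq, div_eq_mul_inv]
      field_simp
      linear_combination
    · simp [rot_apply0, rot_apply1, norm_sq_eq p, inner_eq, div_eq_mul_inv]
      field_simp
      linear_combination
  refine ⟨heq, ?_⟩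
  rw [heq, norm_smul, norm_rot, Real.norm_eq_abs, abs_div]
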